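/- The co-Russell paradox: the theory T_H is unsatisfiable (it has no model; equivalently it proves a contradiction). -/
import Mathlib


open FirstOrder FirstOrder.Language

namespace CoRussellParadox

/-- The language `L'` with a single binary relation symbol `∈` and four constant
symbols `A`, `B`, `H⁺`, `H⁻` (coded as `Fin 4`). -/
def L : Language :=
  ⟨fun n => match n with | 0 => Fin 4 | _ => Empty,
   fun n => match n with | 2 => Unit | _ => Empty⟩

/-- The membership relation symbol. -/
def memRel : L.Relations 2 := Unit.unit

/-- The constant symbol `A`. -/
def cA : L.Constants := (0 : Fin 4)
/-- The constant symbol `B`. -/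
def cB : L.Constants := (1 : Fin 4)
/-- The constant symbol `H⁺`. -/
def cHp : L.Constants := (2 : Fin 4)
/-- The constant symbol `H⁻`. -/
def cHm : L.Constants := (3 : Fin 4)

/-- `memF t₁ t₂` is the atomic formula `t₁ ∈ t₂`. -/
def memF {n : ℕ} (t₁ t₂ : L.Term (Empty ⊕ Fin n)) : L.BoundedFormula Empty n :=
  memRel.boundedFormula₂ t₁ t₂

/-- Inclusion of a term in context `n` into the larger context `n + k`. -/
def tl {n : ℕ} (k : ℕ) (t : L.Term (Empty ⊕ Fin n)) : L.Term (Empty ⊕ Fin (n + k)) :=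
  t.relabel (Sum.map id (Fin.castAdd k))

/-- `z = ⟨a,b⟩` (Kuratowski pair), as the formula
`∃p∃q(∀x(x∈p ↔ x=a) ∧ ∀x(x∈q ↔ (x=a ∨ x=b)) ∧ ∀x(x∈z ↔ (x=p ∨ x=q)))`. -/
def isPairF {n : ℕ} (z a b : L.Term (Empty ⊕ Fin n)) : L.BoundedFormula Empty n :=
  ∃' ∃' (
    (∀' (memF (&⟨n + 2, by omega⟩) (&⟨n, by omega⟩) ⇔
        ((&(⟨n + 2, by omega⟩ : Fin (n + 3))) =' tl 3 a))) ⊓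
    (∀' (memF (&⟨n + 2, by omega⟩) (&⟨n + 1, by omega⟩) ⇔
        (((&(⟨n + 2, by omega⟩ : Fin (n + 3))) =' tl 3 a) ⊔
         ((&(⟨n + 2, by omega⟩ : Fin (n + 3))) =' tl 3 b)))) ⊓
    (∀' (memF (&⟨n + 2, by omega⟩) (tl 3 z) ⇔
        (((&(⟨n + 2, by omega⟩ : Fin (n + 3))) =' (&⟨n, by omega⟩)) ⊔
         ((&(⟨n + 2, by omega⟩ : Fin (n + 3))) =' (&⟨n + 1, by omega⟩))))))

/-- Extensionality: `∀y∀z(∀x(x∈y ↔ x∈z) → y=z)`. -/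
def extAx : L.Sentence :=
  ∀' ∀' ((∀' (memF (&2) (&0) ⇔ memF (&2) (&1))) ⟹ ((&0) =' (&1)))

/-- Pairing: `∀a∀b∃y∀x(x∈y ↔ (x=a ∨ x=b))`. -/
def pairAx : L.Sentence :=
  ∀' ∀' ∃' ∀' (memF (&3) (&2) ⇔ (((&3) =' (&0)) ⊔ ((&3) =' (&1))))

/-- Extracting: `∀a∃y∀x(x∈y ↔ ∃z(z=⟨a,x⟩ ∧ z∈a))`. -/
def extractAx : L.Sentence :=
  ∀' ∃' ∀' (memF (&2) (&1) ⇔ ∃' (isPairF (&3) (&0) (&2) ⊓ memF (&3) (&0)))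

/-- `w = v[v]`, i.e. `∀u(u∈w ↔ ∃z(z=⟨v,u⟩ ∧ z∈v))`, here with `v = &1`, `w = &2`
in context `3` (as used in the axioms for `A` and `B`). -/
def wEqExtractF : L.BoundedFormula Empty 3 :=
  ∀' (memF (&3) (&2) ⇔ ∃' (isPairF (&4) (&1) (&3) ⊓ memF (&4) (&1)))

/-- The axiom `∀x(x∈A ↔ ∃v∃w(x=⟨v,w⟩ ∧ (w∈w ∨ w=v[v])))`. -/
def axA : L.Sentence :=
  ∀' (memF (&0) (Constants.term cA) ⇔
    ∃' ∃' (isPairF (&0) (&1) (&2) ⊓ (memF (&2) (&2) ⊔ wEqExtractF)))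

/-- The axiom `∀x(x∈B ↔ ∃v∃w(x=⟨v,w⟩ ∧ (w∈w ∧ ¬w=v[v])))`. -/
def axB : L.Sentence :=
  ∀' (memF (&0) (Constants.term cB) ⇔
    ∃' ∃' (isPairF (&0) (&1) (&2) ⊓ (memF (&2) (&2) ⊓ ∼wEqExtractF)))

/-- The axiom `∀x(x∈H⁺ ↔ ∃z(z=⟨A,x⟩ ∧ z∈A))`. -/
def axHp : L.Sentence :=
  ∀' (memF (&0) (Constants.term cHp) ⇔
    ∃' (isPairF (&1) (Constants.term cA) (&0) ⊓ memF (&1) (Constants.term cA)))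

/-- The axiom `∀x(x∈H⁻ ↔ ∃z(z=⟨B,x⟩ ∧ z∈B))`. -/
def axHm : L.Sentence :=
  ∀' (memF (&0) (Constants.term cHm) ⇔
    ∃' (isPairF (&1) (Constants.term cB) (&0) ⊓ memF (&1) (Constants.term cB)))

/-- The theory `T_H`: extensionality, pairing, extracting, and the defining axioms
of `A`, `B`, `H⁺` and `H⁻`. -/
def TH : L.Theory := {extAx, pairAx, extractAx, axA, axB, axHp, axHm}


section Semantics

variable {M : Type*} [L.Structure M]

/-- The membership relation of the structure `M`. -/
def E (x y : M) : Prop := Structure.RelMap (L := L) memRel ![x, y]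

theorem snoc3_top {α : Type*} {n : ℕ} (xs : Fin n → α) (p q x : α) (h : n + 2 < n + 3) :
    (Fin.snoc (Fin.snoc (Fin.snoc xs p) q) x : Fin (n+3) → α) ⟨n + 2, h⟩ = x := by
  have : (⟨n + 2, h⟩ : Fin (n + 3)) = Fin.last (n + 2) := rfl
  rw [this, Fin.snoc_last]

theorem snoc3_mid {α : Type*} {n : ℕ} (xs : Fin n → α) (p q x : α) (h : n + 1 < n + 3) :
    (Fin.snoc (Fin.snoc (Fin.snoc xs p) q) x : Fin (n+3) → α) ⟨n + 1, h⟩ = q := by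
  have : (⟨n + 1, h⟩ : Fin (n + 3)) = (Fin.last (n + 1)).castSucc := rfl
  rw [this, Fin.snoc_castSucc, Fin.snoc_last]

theorem snoc3_bot {α : Type*} {n : ℕ} (xs : Fin n → α) (p q x : α) (h : n < n + 3) :
    (Fin.snoc (Fin.snoc (Fin.snoc xs p) q) x : Fin (n+3) → α) ⟨n, h⟩ = p := by
  have : (⟨n, h⟩ : Fin (n + 3)) = ((Fin.last n).castSucc).castSucc := rfl
  rw [this, Fin.snoc_castSucc, Fin.snoc_castSucc, Fin.snoc_last]

/-- Semantic Kuratowski pairhood. -/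
def IsPair (Z A B : M) : Prop :=
  ∃ p q : M, (∀ x, E x p ↔ x = A) ∧ (∀ x, E x q ↔ (x = A ∨ x = B)) ∧
    (∀ x, E x Z ↔ (x = p ∨ x = q))

theorem snoc3_cast {α : Type*} {n : ℕ} (xs : Fin n → α) (p q x : α) :
    Fin.snoc (Fin.snoc (Fin.snoc xs p) q) x ∘ Fin.castAdd 3 = xs := by
  funext i
  have : Fin.castAdd 3 i = ((i.castSucc).castSucc).castSucc := rfl
  simp only [Function.comp_apply, this, Fin.snoc_castSucc]

theorem realize_isPairF {n : ℕ} (z a b : L.Term (Empty ⊕ Fin n)) (v : Empty → M)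
    (xs : Fin n → M) :
    (isPairF z a b).Realize v xs ↔
      IsPair (z.realize (Sum.elim v xs)) (a.realize (Sum.elim v xs))
        (b.realize (Sum.elim v xs)) := by
  simp only [isPairF, memF, tl, IsPair, BoundedFormula.realize_ex, BoundedFormula.realize_inf,
    BoundedFormula.realize_all, BoundedFormula.realize_iff, BoundedFormula.realize_sup,
    BoundedFormula.realize_bdEqual, BoundedFormula.realize_rel₂, Term.realize_var,
    Term.realize_relabel, Sum.elim_comp_map, Function.comp_id, Function.comp_apply,
    Sum.elim_inr, snoc3_top, snoc3_mid, snoc3_bot, snoc3_cast]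
  unfold E
  simp only [and_assoc]

theorem ch1_0 {α : Type*} (a0 : α) : (Fin.snoc (default : Fin 0 → α) a0 : Fin 1 → α) (0 : Fin 1) = a0 := rfl
theorem ch2_0 {α : Type*} (a0 a1 : α) : (Fin.snoc (Fin.snoc (default : Fin 0 → α) a0) a1 : Fin 2 → α) (0 : Fin 2) = a0 := rfl
theorem ch2_1 {α : Type*} (a0 a1 : α) : (Fin.snoc (Fin.snoc (default : Fin 0 → α) a0) a1 : Fin 2 → α) (1 : Fin 2) = a1 := rfl
theorem ch3_0 {α : Type*} (a0 a1 a2 : α) : (Fin.snoc (Fin.snoc (Fin.snoc (default : Fin 0 → α) a0) a1) a2 : Fin 3 → α) (0 : Fin 3) = a0 := rfl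
theorem ch3_1 {α : Type*} (a0 a1 a2 : α) : (Fin.snoc (Fin.snoc (Fin.snoc (default : Fin 0 → α) a0) a1) a2 : Fin 3 → α) (1 : Fin 3) = a1 := rfl
theorem ch3_2 {α : Type*} (a0 a1 a2 : α) : (Fin.snoc (Fin.snoc (Fin.snoc (default : Fin 0 → α) a0) a1) a2 : Fin 3 → α) (2 : Fin 3) = a2 := rfl
theorem ch4_0 {α : Type*} (a0 a1 a2 a3 : α) : (Fin.snoc (Fin.snoc (Fin.snoc (Fin.snoc (default : Fin 0 → α) a0) a1) a2) a3 : Fin 4 → α) (0 : Fin 4) = a0 := rfl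
theorem ch4_1 {α : Type*} (a0 a1 a2 a3 : α) : (Fin.snoc (Fin.snoc (Fin.snoc (Fin.snoc (default : Fin 0 → α) a0) a1) a2) a3 : Fin 4 → α) (1 : Fin 4) = a1 := rfl
theorem ch4_2 {α : Type*} (a0 a1 a2 a3 : α) : (Fin.snoc (Fin.snoc (Fin.snoc (Fin.snoc (default : Fin 0 → α) a0) a1) a2) a3 : Fin 4 → α) (2 : Fin 4) = a2 := rfl
theorem ch4_3 {α : Type*} (a0 a1 a2 a3 : α) : (Fin.snoc (Fin.snoc (Fin.snoc (Fin.snoc (default : Fin 0 → α) a0) a1) a2) a3 : Fin 4 → α) (3 : Fin 4) = a3 := rfl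
theorem ch5_0 {α : Type*} (a0 a1 a2 a3 a4 : α) : (Fin.snoc (Fin.snoc (Fin.snoc (Fin.snoc (Fin.snoc (default : Fin 0 → α) a0) a1) a2) a3) a4 : Fin 5 → α) (0 : Fin 5) = a0 := rfl
theorem ch5_1 {α : Type*} (a0 a1 a2 a3 a4 : α) : (Fin.snoc (Fin.snoc (Fin.snoc (Fin.snoc (Fin.snoc (default : Fin 0 → α) a0) a1) a2) a3) a4 : Fin 5 → α) (1 : Fin 5) = a1 := rfl
theorem ch5_2 {α : Type*} (a0 a1 a2 a3 a4 : α) : (Fin.snoc (Fin.snoc (Fin.snoc (Fin.snoc (Fin.snoc (default : Fin 0 → α) a0) a1) a2) a3) a4 : Fin 5 → α) (2 : Fin 5) = a2 := rfl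
theorem ch5_3 {α : Type*} (a0 a1 a2 a3 a4 : α) : (Fin.snoc (Fin.snoc (Fin.snoc (Fin.snoc (Fin.snoc (default : Fin 0 → α) a0) a1) a2) a3) a4 : Fin 5 → α) (3 : Fin 5) = a3 := rfl
theorem ch5_4 {α : Type*} (a0 a1 a2 a3 a4 : α) : (Fin.snoc (Fin.snoc (Fin.snoc (Fin.snoc (Fin.snoc (default : Fin 0 → α) a0) a1) a2) a3) a4 : Fin 5 → α) (4 : Fin 5) = a4 := rfl

/-- `w = v[v]` semantically. -/
def WEq (v w : M) : Prop := ∀ u, E u w ↔ ∃ z, IsPair z v u ∧ E z v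

theorem pair_inj {z s t s' t' : M} (h : IsPair z s t) (h' : IsPair z s' t') :
    s = s' ∧ t = t' := by
  obtain ⟨p, q, hp, hq, hz⟩ := h
  obtain ⟨p', q', hp', hq', hz'⟩ := h'
  have Hpz : p = p' ∨ p = q' := (hz' p).mp ((hz p).mpr (Or.inl rfl))
  have Hqz : q = p' ∨ q = q' := (hz' q).mp ((hz q).mpr (Or.inr rfl))
  have Hq'z : q' = p ∨ q' = q := (hz q').mp ((hz' q').mpr (Or.inr rfl))
  have hEs' : E s' p := by
    rcases Hpz with h | h
    · rw [h]; exact (hp' s').mpr rfl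
    · rw [h]; exact (hq' s').mpr (Or.inl rfl)
  have hss : s' = s := (hp s').mp hEs'
  have h1 : t' = s ∨ t' = t := by
    have hEt' : E t' q' := (hq' t').mpr (Or.inr rfl)
    rcases Hq'z with h | h
    · exact Or.inl ((hp t').mp (h ▸ hEt'))
    · exact (hq t').mp (h ▸ hEt')
  have h2 : t = s ∨ t = t' := by
    have hEt : E t q := (hq t).mpr (Or.inr rfl)
    rcases Hqz with h | h
    · have := (hp' t).mp (h ▸ hEt)
      exact Or.inl (this.trans hss)
    · rcases (hq' t).mp (h ▸ hEt) with h' | h'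
      · exact Or.inl (h'.trans hss)
      · exact Or.inr h'
  refine ⟨hss.symm, ?_⟩
  rcases h2 with h2 | h2
  · rcases h1 with h1 | h1
    · exact h2.trans h1.symm
    · exact h1.symm
  · exact h2

theorem paradox
    (hext : ∀ y z : M, (∀ x, E x y ↔ E x z) → y = z)
    (hpair : ∀ s t : M, ∃ y, ∀ x, E x y ↔ x = s ∨ x = t)
    (A B Hp Hm : M)
    (hA : ∀ x, E x A ↔ ∃ v w, IsPair x v w ∧ (E w w ∨ WEq v w))
    (hB : ∀ x, E x B ↔ ∃ v w, IsPair x v w ∧ (E w w ∧ ¬ WEq v w))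
    (hHp : ∀ x, E x Hp ↔ ∃ z, IsPair z A x ∧ E z A)
    (hHm : ∀ x, E x Hm ↔ ∃ z, IsPair z B x ∧ E z B) : False := by
  have mkpair : ∀ s t : M, ∃ z, IsPair z s t := by
    intro s t
    obtain ⟨p, hp⟩ := hpair s s
    obtain ⟨q, hq⟩ := hpair s t
    obtain ⟨z, hz⟩ := hpair p q
    exact ⟨z, p, q, fun x => by rw [hp x, or_self], hq, hz⟩
  have hHp' : ∀ x : M, E x Hp ↔ (E x x ∨ x = Hp) := by
    intro x
    constructor
    · intro hx
      obtain ⟨z, hzax, hzA⟩ := (hHp x).mp hx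
      obtain ⟨v, w, hzvw, hw⟩ := (hA z).mp hzA
      obtain ⟨hv, hwx⟩ := pair_inj hzax hzvw
      subst hv; subst hwx
      rcases hw with hww | hweq
      · exact Or.inl hww
      · exact Or.inr (hext x Hp (fun u => (hweq u).trans (hHp u).symm))
    · intro hx
      obtain ⟨z, hz⟩ := mkpair A x
      refine (hHp x).mpr ⟨z, hz, (hA z).mpr ⟨A, x, hz, ?_⟩⟩
      rcases hx with hxx | hxhp
      · exact Or.inl hxx
      · subst hxhp; exact Or.inr (fun u => hHp u)
  have hHm' : ∀ x : M, E x Hm ↔ (E x x ∧ x ≠ Hm) := by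
    intro x
    constructor
    · intro hx
      obtain ⟨z, hzbx, hzB⟩ := (hHm x).mp hx
      obtain ⟨v, w, hzvw, hww, hnw⟩ := (hB z).mp hzB
      obtain ⟨hv, hwx⟩ := pair_inj hzbx hzvw
      subst hv; subst hwx
      refine ⟨hww, fun hxm => hnw ?_⟩
      subst hxm; exact fun u => hHm u
    · rintro ⟨hxx, hne⟩
      obtain ⟨z, hz⟩ := mkpair B x
      refine (hHm x).mpr ⟨z, hz, (hB z).mpr ⟨B, x, hz, hxx, fun hw => ?_⟩⟩
      exact hne (hext x Hm (fun u => (hw u).trans (hHm u).symm))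
  have e1 : E Hp Hp := (hHp' Hp).mpr (Or.inr rfl)
  have e2 : ¬ E Hm Hm := fun h => ((hHm' Hm).mp h).2 rfl
  have ne : Hp ≠ Hm := fun h => e2 (h ▸ e1)
  refine ne (hext Hp Hm (fun x => ?_))
  rw [hHp' x, hHm' x]
  constructor
  · rintro (hxx | rfl)
    · exact ⟨hxx, fun h => e2 (h ▸ hxx)⟩
    · exact ⟨e1, ne⟩
  · rintro ⟨hxx, _⟩
    exact Or.inl hxx

end Semantics

/-- The co-Russell paradox: the theory `T_H` is unsatisfiable (it has no model). -/
theorem TH_unsatisfiable : ¬ TH.IsSatisfiable := by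
  rintro ⟨M⟩
  have hext := Theory.realize_sentence_of_mem (M := M) TH (show extAx ∈ TH by simp [TH])
  have hpair := Theory.realize_sentence_of_mem (M := M) TH (show pairAx ∈ TH by simp [TH])
  have hA := Theory.realize_sentence_of_mem (M := M) TH (show axA ∈ TH by simp [TH])
  have hB := Theory.realize_sentence_of_mem (M := M) TH (show axB ∈ TH by simp [TH])
  have hHp := Theory.realize_sentence_of_mem (M := M) TH (show axHp ∈ TH by simp [TH])
  have hHm := Theory.realize_sentence_of_mem (M := M) TH (show axHm ∈ TH by simp [TH])
  simp only [extAx, pairAx, axA, axB, axHp, axHm, wEqExtractF, memF, Sentence.Realize,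
    Formula.Realize, BoundedFormula.realize_all, BoundedFormula.realize_ex,
    BoundedFormula.realize_imp, BoundedFormula.realize_iff, BoundedFormula.realize_inf,
    BoundedFormula.realize_sup, BoundedFormula.realize_not, BoundedFormula.realize_bdEqual,
    BoundedFormula.realize_rel₂, Term.realize_var, Term.realize_constants, realize_isPairF,
    Sum.elim_inr, Function.comp_apply,
    ch1_0, ch2_0, ch2_1, ch3_0, ch3_1, ch3_2, ch4_0, ch4_1, ch4_2, ch4_3, ch5_0, ch5_1, ch5_2, ch5_3, ch5_4] at hext hpair hA hB hHp hHm
  exact paradox hext hpair _ _ _ _ hA hB hHp hHm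

end CoRussellParadox
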